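/- Let n ≥ 1 and let G_0, …, G_{n−1} ∈ M_n(ℂ) satisfy: (1) G_{n−1} = c·E_{n−1,n−1} for some c ≠ 0; (2) for every p ∈ {0,…,n−2}, (G_p)_{n−1,p} ≠ 0; (3) for every p ∈ {1,…,n−2} and every k < p, (G_p)_{n−1,k} = 0. Then the star-subalgebra of M_n(ℂ) (with conjugate-transpose as star) generated over ℂ by {G_0, …, G_{n−1}} is all of M_n(ℂ). -/

import Mathlib

open MeasureTheory Filter
open scoped ENNReal

noncomputable section

/-- Generalized binomial coefficient `x(x-1)⋯(x-j+1)/j!`. -/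
def gbinom (x : ℝ) (j : ℕ) : ℝ :=
  (∏ i ∈ Finset.range j, (x - i)) / (Nat.factorial j)

/-- Shifted Jacobi polynomial `Q_m^{(α,β)}` on `[0,1]`:
`Q_m^{(α,β)}(t) = Σ_{k=0}^m binom(α+β+m+k,k)·binom(β+m,m-k)·(-1)^{m-k}·t^k`. -/
def jacQ (α β : ℝ) (m : ℕ) (t : ℝ) : ℝ :=
  ∑ k ∈ Finset.range (m + 1),
    gbinom (α + β + m + k) k * gbinom (β + m) (m - k) * (-1 : ℝ) ^ (m - k) * t ^ k

/-- Normalizing coefficient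
`κ(α,β,m) = sqrt((2m+α+β+1)·Γ(m+α+β+1)·m!/(Γ(m+α+1)·Γ(m+β+1)))`. -/
def jacCoef (α β : ℝ) (m : ℕ) : ℝ :=
  Real.sqrt ((2 * m + α + β + 1) * Real.Gamma (m + α + β + 1) * (Nat.factorial m) /
    (Real.Gamma (m + α + 1) * Real.Gamma (m + β + 1)))

/-- Jacobi function `J_m^{(α,β)}(t) = κ(α,β,m)·(1-t)^{α/2}·t^{β/2}·Q_m^{(α,β)}(t)`. -/
def jacJ (α β : ℝ) (m : ℕ) (t : ℝ) : ℝ :=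
  jacCoef α β m * (1 - t) ^ (α / 2) * t ^ (β / 2) * jacQ α β m t

/-- `dd n ξ = min(n+ξ, n)` (for `ξ ≥ 1-n`), written as a total function into `ℕ`. -/
def dd (n : ℕ) (ξ : ℤ) : ℕ := n - (-ξ).toNat

lemma dd_le (n : ℕ) (ξ : ℤ) : dd n ξ ≤ n := Nat.sub_le _ _

/-- The set `Ω_n = {ξ ∈ ℤ : ξ ≥ -n+1}` as a subtype. -/
abbrev Om (n : ℕ) : Type := {ξ : ℤ // 1 - (n : ℤ) ≤ ξ}

/-- The entry `γ(a)_{ξ,j,k} = κ(α,|ξ|,j)·κ(α,|ξ|,k)·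
∫₀¹ a(√t)·Q_j^{(α,|ξ|)}(t)·Q_k^{(α,|ξ|)}(t)·(1-t)^α·t^{|ξ|} dt`. -/
def gammaEnt (α : ℝ) (a : ℝ → ℂ) (ξ : ℤ) (j k : ℕ) : ℂ :=
  ((jacCoef α ξ.natAbs j * jacCoef α ξ.natAbs k : ℝ) : ℂ) *
    ∫ t in (0:ℝ)..1, a (Real.sqrt t) *
      ((jacQ α ξ.natAbs j t * jacQ α ξ.natAbs k t * (1 - t) ^ α * t ^ (ξ.natAbs) : ℝ) : ℂ)

/-- The matrix `γ(a)_ξ ∈ M_{d_ξ}(ℂ)`. -/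
def gammaMat (n : ℕ) (α : ℝ) (a : ℝ → ℂ) (ξ : ℤ) :
    Matrix (Fin (dd n ξ)) (Fin (dd n ξ)) ℂ :=
  Matrix.of fun j k => gammaEnt α a ξ (j : ℕ) (k : ℕ)

/-- Bounded measurable functions on `[0,1)` having a finite limit at `1⁻`. -/
def LinfLim (a : ℝ → ℂ) : Prop :=
  Measurable a ∧ (∃ C : ℝ, ∀ r ∈ Set.Ico (0:ℝ) 1, ‖a r‖ ≤ C) ∧
    ∃ ω : ℂ, Tendsto a (nhdsWithin 1 (Set.Ico (0:ℝ) 1)) (nhds ω)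

/-- The generating symbol `g_p(t) = Q_p^{(α,0)}(t²)`, as a complex-valued function. -/
def gSym (α : ℝ) (p : ℕ) (t : ℝ) : ℂ := ((jacQ α 0 p (t ^ 2) : ℝ) : ℂ)

/-- `⟨A w, w⟩ = Σ_{j,k} conj(w_j)·A_{j,k}·w_k`. -/
def innerForm {d : ℕ} (A : Matrix (Fin d) (Fin d) ℂ) (w : Fin d → ℂ) : ℂ :=
  ∑ j : Fin d, ∑ k : Fin d, (starRingEnd ℂ) (w j) * A j k * w k

/-- generators with the prescribed last-row structure generate the full matrix
star-algebra `M_n(ℂ)`. -/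
theorem statement8 (n : ℕ) (hn : 1 ≤ n) (G : Fin n → Matrix (Fin n) (Fin n) ℂ)
    (h1 : ∃ c : ℂ, c ≠ 0 ∧
      G ⟨n - 1, by omega⟩ = c • Matrix.single ⟨n - 1, by omega⟩ ⟨n - 1, by omega⟩ 1)
    (h2 : ∀ p : Fin n, (p : ℕ) < n - 1 → G p ⟨n - 1, by omega⟩ p ≠ 0)
    (h3 : ∀ p : Fin n, 1 ≤ (p : ℕ) → (p : ℕ) < n - 1 →
      ∀ k : Fin n, (k : ℕ) < (p : ℕ) → G p ⟨n - 1, by omega⟩ k = 0) :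
    StarAlgebra.adjoin ℂ (Set.range G) = ⊤ := by
  set A := StarAlgebra.adjoin ℂ (Set.range G) with hA
  have hNlt : n - 1 < n := by omega
  set N : Fin n := ⟨n - 1, hNlt⟩ with hNdef
  have hGmem : ∀ p : Fin n, G p ∈ A := fun p => StarAlgebra.subset_adjoin ℂ _ ⟨p, rfl⟩
  obtain ⟨c, hc0, hc⟩ := h1
  have hE : Matrix.single N N (1 : ℂ) ∈ A := by
    have h := hGmem N
    rw [hc] at h
    have heq : Matrix.single N N (1 : ℂ)
        = c⁻¹ • (c • Matrix.single N N (1 : ℂ)) := by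
      rw [smul_smul, inv_mul_cancel₀ hc0, one_smul]
    rw [heq]
    exact A.smul_mem h _
  have hexp : ∀ p : Fin n, Matrix.single N N (1 : ℂ) * G p
      = ∑ k : Fin n, (G p N k) • Matrix.single N k (1 : ℂ) := by
    intro p
    ext i j
    simp only [Matrix.mul_apply, Matrix.single, Matrix.of_apply, Matrix.sum_apply,
      Matrix.smul_apply, smul_eq_mul, mul_ite, mul_one, mul_zero, ite_mul, one_mul, zero_mul]
    by_cases hi : N = i
    · subst hi
      simp [Finset.sum_ite_eq, Finset.sum_ite_eq']
    · simp [hi]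
  have key : ∀ m : ℕ, ∀ p : Fin n, n - 1 - (p : ℕ) ≤ m →
      Matrix.single N p (1 : ℂ) ∈ A := by
    intro m
    induction m with
    | zero =>
      intro p hp
      have hple : (p : ℕ) ≤ n - 1 := by omega
      have : p = N := by
        apply Fin.ext
        simp only [hNdef]
        omega
      rw [this]; exact hE
    | succ m ih =>
      intro p hp
      by_cases hcase : n - 1 - (p : ℕ) ≤ m
      · exact ih p hcase
      · have hplt : (p : ℕ) < n - 1 := by omega
        have hNp : N = (⟨n - 1, by omega⟩ : Fin n) := rfl
        have hzero : ∀ k : Fin n, (k : ℕ) < (p : ℕ) → G p N k = 0 := by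
          intro k hk
          rw [hNp]
          exact h3 p (by omega) hplt k hk
        have hsplit : ∑ k : Fin n, (G p N k) • Matrix.single N k (1 : ℂ)
            = (G p N p) • Matrix.single N p (1 : ℂ) +
              ∑ k ∈ Finset.univ.filter (fun k : Fin n => (p : ℕ) < (k : ℕ)),
                (G p N k) • Matrix.single N k (1 : ℂ) := by
          rw [← Finset.sum_filter_add_sum_filter_not Finset.univ
            (fun k : Fin n => (p : ℕ) < (k : ℕ)), add_comm]
          congr 1
          apply Finset.sum_eq_single_of_mem p
          · simp
          · intro k hk hkp
            have hkle : ¬ (p : ℕ) < (k : ℕ) := by simpa using hk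
            have hklt : (k : ℕ) < (p : ℕ) := by
              have := Fin.val_ne_of_ne hkp
              omega
            rw [hzero k hklt, zero_smul]
        have hSmem : ∑ k ∈ Finset.univ.filter (fun k : Fin n => (p : ℕ) < (k : ℕ)),
            (G p N k) • Matrix.single N k (1 : ℂ) ∈ A := by
          apply Subalgebra.sum_mem
          intro k hk
          have hk' : (p : ℕ) < (k : ℕ) := by simpa using hk
          exact A.smul_mem (ih k (by omega)) _
        have hne : G p N p ≠ 0 := by rw [hNp]; exact h2 p hplt
        have hmem : (G p N p) • Matrix.single N p (1 : ℂ) ∈ A := by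
          have : (G p N p) • Matrix.single N p (1 : ℂ)
              = Matrix.single N N (1 : ℂ) * G p -
                ∑ k ∈ Finset.univ.filter (fun k : Fin n => (p : ℕ) < (k : ℕ)),
                  (G p N k) • Matrix.single N k (1 : ℂ) := by
            rw [hexp p, hsplit, add_sub_cancel_right]
          rw [this]
          exact A.sub_mem (A.mul_mem hE (hGmem p)) hSmem
        have : Matrix.single N p (1 : ℂ)
            = (G p N p)⁻¹ • ((G p N p) • Matrix.single N p (1 : ℂ)) := by
          rw [smul_smul, inv_mul_cancel₀ hne, one_smul]
        rw [this]
        exact A.smul_mem hmem _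
  have hrow : ∀ p : Fin n, Matrix.single N p (1 : ℂ) ∈ A :=
    fun p => key n p (by omega)
  have hstar : ∀ p : Fin n, Matrix.single p N (1 : ℂ) ∈ A := by
    intro p
    have : Matrix.single p N (1 : ℂ) = star (Matrix.single N p (1 : ℂ)) := by
      ext i j
      simp only [Matrix.single, Matrix.of_apply, Matrix.star_apply]
      split <;> split <;> simp_all
    rw [this]
    exact star_mem (hrow p)
  have hall : ∀ i j : Fin n, Matrix.single i j (1 : ℂ) ∈ A := by
    intro i j
    have : Matrix.single i j (1 : ℂ)
        = Matrix.single i N (1 : ℂ) * Matrix.single N j (1 : ℂ) := by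
      rw [Matrix.single_mul_single_same, one_mul]
    rw [this]
    exact A.mul_mem (hstar i) (hrow j)
  rw [eq_top_iff]
  intro M _
  rw [Matrix.matrix_eq_sum_single M]
  apply Subalgebra.sum_mem
  intro i _
  apply Subalgebra.sum_mem
  intro j _
  have : Matrix.single i j (M i j) = (M i j) • Matrix.single i j (1 : ℂ) := by
    rw [Matrix.smul_single, smul_eq_mul, mul_one]
  rw [this]
  exact A.smul_mem (hall i j) _
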